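/- Semi-strongness of extensions of partial E-fields is transitive: if F₁ ⊆ F₂ ⊆ F₃ are partial E-fields with F₁ ⩸ F₂ and F₂ ⩸ F₃, then F₁ ⩸ F₃. -/

import Mathlib

noncomputable section
open scoped Pointwise
open Cardinal

namespace Paper

variable (F : Type*) [Field F] [CharZero F]

/-- `td F X Y` : the transcendence degree of the field `ℚ(X ∪ Y)` over `ℚ(X)`,
computed as the supremum of cardinalities of subsets of `Y` which are algebraically
independent over the subfield generated by `X`. -/
def td (X Y : Set F) : Cardinal :=
  ⨆ p : {s : Set F // s ⊆ Y ∧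
      AlgebraicIndependent (IntermediateField.adjoin ℚ X) (fun y : s => (y : F))},
    Cardinal.mk p.1

/-- Natural-number valued relative transcendence degree. -/
def tdN (X Y : Set F) : ℕ := (td F X Y).toNat

/-- `ldim F X Y` : the dimension of the quotient of the `ℚ`-span of `X ∪ Y`
by the `ℚ`-span of `X`, i.e. `ldim_ℚ(Y/X)`. -/
def ldim (X Y : Set F) : Cardinal :=
  Module.rank ℚ (Submodule.span ℚ ((Submodule.span ℚ X).mkQ '' Y))

/-- Natural-number valued relative linear dimension. -/
def ldimN (X Y : Set F) : ℕ := (ldim F X Y).toNat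

/-- The Schanuel property for a total exponential map:
`td(x̄ ∪ exp(x̄)/∅) ≥ ldim_ℚ(x̄/∅)` for every finite tuple `x̄`. -/
def Schanuel (exp : F → F) : Prop :=
  ∀ s : Finset F, ldim F ∅ ↑s ≤ td F ∅ (↑s ∪ exp '' ↑s)

/-- A partial E-field structure on a field `F` of characteristic zero: a `ℚ`-subspace
`D`, and an exponential map which is a homomorphism from `D` to `Fˣ`. -/
structure PEField (F : Type*) [Field F] [CharZero F] where
  D : Submodule ℚ F
  exp : F → F
  exp_ne_zero : ∀ a ∈ D, exp a ≠ 0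
  exp_add : ∀ a ∈ D, ∀ b ∈ D, exp (a + b) = exp a * exp b

namespace PEField

variable {F} (E : PEField F)

/-- The kernel of the exponential map, as a set. -/
def kerSet : Set F := {a | a ∈ E.D ∧ E.exp a = 1}

lemma exp_zero : E.exp 0 = 1 := by
  have h0 : (0 : F) ∈ E.D := E.D.zero_mem
  have h := E.exp_add 0 h0 0 h0
  rw [add_zero] at h
  have hne := E.exp_ne_zero 0 h0
  have h' : E.exp 0 * 1 = E.exp 0 * E.exp 0 := by rw [mul_one]; exact h
  exact (mul_left_cancel₀ hne h').symm

/-- The kernel of the exponential map, as an additive subgroup of `F`. -/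
def ker : AddSubgroup F where
  carrier := {a | a ∈ E.D ∧ E.exp a = 1}
  zero_mem' := ⟨E.D.zero_mem, E.exp_zero⟩
  add_mem' := by
    rintro a b ⟨haD, ha⟩ ⟨hbD, hb⟩
    exact ⟨E.D.add_mem haD hbD, by rw [E.exp_add a haD b hbD, ha, hb, mul_one]⟩
  neg_mem' := by
    rintro a ⟨haD, ha⟩
    refine ⟨E.D.neg_mem haD, ?_⟩
    have h := E.exp_add a haD (-a) (E.D.neg_mem haD)
    rw [add_neg_cancel, E.exp_zero, ha, one_mul] at h
    exact h.symm

/-- The image `I(F)` of the exponential map. -/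
def img : Set F := E.exp '' (E.D : Set F)

/-- `F` has full kernel iff every root of unity lies in the image of `exp`. -/
def FullKernel : Prop :=
  ∀ x : F, (∃ m : ℕ, 0 < m ∧ x ^ m = 1) → x ∈ E.exp '' (E.D : Set F)

/-- `F` has very full kernel iff every coherent system of roots of unity is of the
form `(exp (a/m))_{m ≥ 1}` for some `a ∈ D(F)`. -/
def VeryFullKernel : Prop :=
  ∀ c : ℕ → F, c 1 = 1 → (∀ r m : ℕ, 0 < r → 0 < m → c (r * m) ^ r = c m) →
    ∃ a ∈ E.D, ∀ m : ℕ, 0 < m → E.exp (a / (m : F)) = c m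

end PEField

/-- A partial E-subfield of a partial E-field: a subfield together with a `ℚ`-subspace
of `D(F)` contained in it, closed under the exponential map. -/
structure ESub {F : Type*} [Field F] [CharZero F] (E : PEField F) where
  carrier : Subfield F
  dom : Submodule ℚ F
  dom_le : dom ≤ E.D
  dom_sub : (dom : Set F) ⊆ (carrier : Set F)
  exp_mem : ∀ a ∈ dom, E.exp a ∈ carrier

namespace ESub

variable {F : Type*} [Field F] [CharZero F] {E : PEField F}

/-- The kernel of a partial E-subfield. -/
def kerSet (A : ESub E) : Set F := {a | a ∈ A.dom ∧ E.exp a = 1}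

/-- Inclusion (extension) of partial E-subfields. -/
def le (A B : ESub E) : Prop := A.carrier ≤ B.carrier ∧ A.dom ≤ B.dom

end ESub

/-- The whole of a partial E-field, viewed as a partial E-subfield of itself. -/
def PEField.top {F : Type*} [Field F] [CharZero F] (E : PEField F) : ESub E where
  carrier := ⊤
  dom := E.D
  dom_le := le_rfl
  dom_sub := fun x _ => Subfield.mem_top x
  exp_mem := fun a _ => Subfield.mem_top _

variable {F}

/-- The relative predimension function `Δ_B(x̄/A)` for an extension `A ⊆ B` of
partial E-(sub)fields:
`td(x̄ ∪ exp(x̄ ∩ D(B)) / A ∪ ker(B)) − ldim_ℚ(x̄ ∩ D(B) / D(A) ∪ ker(B))`. -/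
def Delta (E : PEField F) (A B : ESub E) (s : Finset F) : ℤ :=
  (tdN F ((A.carrier : Set F) ∪ B.kerSet) (↑s ∪ E.exp '' (↑s ∩ (B.dom : Set F))) : ℤ) -
    (ldimN F ((A.dom : Set F) ∪ B.kerSet) (↑s ∩ (B.dom : Set F)) : ℤ)

/-- The extension `A ⊆ B` of partial E-(sub)fields is semi-strong: `Δ_B(x̄/A) ≥ 0`
for all tuples `x̄` from `B`, and `A` is algebraically free from `ker(B)` over `ker(A)`. -/
def SemiStrong (E : PEField F) (A B : ESub E) : Prop :=
  (∀ s : Finset F, ↑s ⊆ (B.carrier : Set F) → 0 ≤ Delta E A B s) ∧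
  (∀ t : Finset F, ↑t ⊆ (A.carrier : Set F) →
    tdN F (A.kerSet ∪ B.kerSet) ↑t = tdN F A.kerSet ↑t)

/-- The predimension `δ(ā/X)` of a finite tuple over a subset `X` of a partial E-field:
`td(ā ∪ exp(ā ∩ D) / X ∪ exp(X ∩ D)) − ldim_ℚ(ā/X)`. -/
def deltaSet (E : PEField F) (X : Set F) (s : Finset F) : ℤ :=
  (tdN F (X ∪ E.exp '' (X ∩ (E.D : Set F))) (↑s ∪ E.exp '' (↑s ∩ (E.D : Set F))) : ℤ) -
    (ldimN F X ↑s : ℤ)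

lemma span_le_subfield {K : Subfield F} {S : Set F} (h : S ⊆ (K : Set F)) :
    ((Submodule.span ℚ S : Submodule ℚ F) : Set F) ⊆ (K : Set F) := by
  intro x hx
  induction hx using Submodule.span_induction with
  | mem x hx => exact h hx
  | zero => exact zero_mem K
  | add x y _ _ hx hy => exact add_mem hx hy
  | smul q x _ hx => rw [Rat.smul_def]; exact mul_mem (SubfieldClass.ratCast_mem K q) hx

/-- The partial E-subfield `⟨X⟩_F` generated by a subset `X`: its domain is
`span_ℚ(X ∩ D(F))` and its field is generated by `X ∪ exp(span_ℚ(X ∩ D(F)))`. -/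
def genSub (E : PEField F) (X : Set F) : ESub E where
  carrier := Subfield.closure
    (X ∪ E.exp '' ((Submodule.span ℚ (X ∩ (E.D : Set F)) : Submodule ℚ F) : Set F))
  dom := Submodule.span ℚ (X ∩ (E.D : Set F))
  dom_le := Submodule.span_le.mpr Set.inter_subset_right
  dom_sub := by
    refine span_le_subfield ?_
    intro x hx
    exact Subfield.subset_closure (Set.mem_union_left _ hx.1)
  exp_mem := fun a ha => Subfield.subset_closure (Set.mem_union_right _ ⟨a, ha, rfl⟩)

/-- `Δ_F(x̄/B)` for an arbitrary subset `B` : the predimension of `x̄` over the partial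
E-subfield `⟨ker(F) ∪ B⟩_F`. -/
def DeltaOver (E : PEField F) (B : Set F) (s : Finset F) : ℤ :=
  Delta E (genSub E (E.kerSet ∪ B)) E.top s

/-- The natural map `Fˣ → ℚ ⊗[ℤ] Additive Fˣ`. -/
def toQV : Fˣ → TensorProduct ℤ ℚ (Additive Fˣ) :=
  fun u => TensorProduct.tmul ℤ (1 : ℚ) (Additive.ofMul u)

/-- The multiplicative rank `mrk(B/H)` : the dimension of the `ℚ`-span of the image of
`B` in `ℚ ⊗_ℤ Fˣ`, modulo the `ℚ`-span of the image of `H`. -/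
def mrk (H B : Set Fˣ) : ℕ :=
  (Module.rank ℚ (Submodule.span ℚ
    ((Submodule.span ℚ (toQV '' H)).mkQ '' (toQV '' B)))).toNat

/-- The set of units lying in a given subset of `F`. -/
def unitsOf (S : Set F) : Set Fˣ := {u : Fˣ | (u : F) ∈ S}

/-- The partial E-subfield with underlying set `X` and domain `DX` is semi-strong in
the partial E-field `E`. -/
def SemiStrongSet (E : PEField F) (X DX : Set F) : Prop :=
  (∀ s : Finset F,
    0 ≤ (tdN F (X ∪ E.kerSet) (↑s ∪ E.exp '' (↑s ∩ (E.D : Set F))) : ℤ) -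
        (ldimN F (DX ∪ E.kerSet) (↑s ∩ (E.D : Set F)) : ℤ)) ∧
  (∀ t : Finset F, ↑t ⊆ X →
    tdN F ({a ∈ DX | E.exp a = 1} ∪ E.kerSet) ↑t = tdN F {a ∈ DX | E.exp a = 1} ↑t)

/-- An ELA-field: an algebraically closed field of characteristic zero together with a
total exponential map which is surjective onto the multiplicative group. -/
structure ELAField (K : Type*) [Field K] [CharZero K] where
  exp : K → K
  exp_ne_zero : ∀ x, exp x ≠ 0
  exp_add : ∀ x y, exp (x + y) = exp x * exp y
  alg_closed : IsAlgClosed K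
  exp_surj : ∀ y : K, y ≠ 0 → ∃ x, exp x = y

/-- An ELA-field regarded as a (total) partial E-field. -/
def ELAField.toPE {K : Type*} [Field K] [CharZero K] (L : ELAField K) : PEField K :=
  ⟨⊤, L.exp, fun a _ => L.exp_ne_zero a, fun a _ b _ => L.exp_add a b⟩

/-- `S` is an ELA-closed subfield of the ELA-field `K`: it is (the underlying set of) a
subfield, closed under `exp`, contains an `exp`-preimage of each of its nonzero elements,
and is relatively algebraically closed in `K`. -/
def IsELASub {K : Type*} [Field K] [CharZero K] (L : ELAField K) (S : Set K) : Prop :=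
  (∃ Sf : Subfield K, (Sf : Set K) = S) ∧
  (∀ x ∈ S, L.exp x ∈ S) ∧
  (∀ y ∈ S, y ≠ 0 → ∃ x ∈ S, L.exp x = y) ∧
  (∀ x : K, ∀ p : Polynomial K, p ≠ 0 → (∀ i, p.coeff i ∈ S) →
    Polynomial.eval x p = 0 → x ∈ S)

/-- `S = ⟨A⟩^{ELA}_K` : `S` is the smallest ELA-closed subfield of `K` containing `A`. -/
def IsELAGen {K : Type*} [Field K] [CharZero K] (L : ELAField K) (A S : Set K) : Prop :=
  IsELASub L S ∧ A ⊆ S ∧ ∀ T : Set K, IsELASub L T → A ⊆ T → S ⊆ T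


/- ===== Infrastructure for semiStrong_trans ===== -/
section SSInfra

variable {F : Type*} [Field F] [CharZero F] [DecidableEq F]

open Polynomial

/-- The base field generated by a set. -/
noncomputable abbrev Kf (X : Set F) : IntermediateField ℚ F := IntermediateField.adjoin ℚ X

/-- `a` is algebraic over the subfield generated by `B`, phrased via coefficient membership. -/
def algOver (B : Set F) (a : F) : Prop :=
  ∃ p : Polynomial F, p ≠ 0 ∧ (∀ i, p.coeff i ∈ Subfield.closure B) ∧ Polynomial.eval a p = 0

/-- Algebraic independence of a set over the subfield generated by `X`. -/
def AI (X s : Set F) : Prop :=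
  AlgebraicIndependent (IntermediateField.adjoin ℚ X) (fun y : s => (y : F))

lemma algOver.mono {B B' : Set F} (h : B ⊆ B') {a : F} (ha : algOver B a) : algOver B' a := by
  obtain ⟨p, h0, hc, he⟩ := ha
  exact ⟨p, h0, fun i => Subfield.closure_mono h (hc i), he⟩

lemma algOver_of_mem_closure {B : Set F} {a : F} (h : a ∈ Subfield.closure B) : algOver B a := by
  refine ⟨X - C a, Polynomial.X_sub_C_ne_zero a, fun i => ?_, by simp⟩
  rcases i with _ | _ | i <;>
    simp [Polynomial.coeff_X, Polynomial.coeff_sub, neg_mem, h, Subfield.zero_mem,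
      Subfield.one_mem]

lemma algOver_of_mem {B : Set F} {a : F} (h : a ∈ B) : algOver B a :=
  algOver_of_mem_closure (Subfield.subset_closure h)


lemma isAlgebraic_iff_poly {S : Type*} [CommRing S] [Algebra S F]
    (hinj : Function.Injective (algebraMap S F)) (C : Set F)
    (hC : Set.range (algebraMap S F) = C) (a : F) :
    IsAlgebraic S a ↔ ∃ p : Polynomial F, p ≠ 0 ∧ (∀ i, p.coeff i ∈ C) ∧
      Polynomial.eval a p = 0 := by
  classical
  subst hC
  constructor
  · rintro ⟨p, hp0, hpa⟩
    refine ⟨p.map (algebraMap S F),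
      fun h => hp0 (Polynomial.map_injective _ hinj (by simpa using h)),
      fun i => by rw [Polynomial.coeff_map]; exact ⟨_, rfl⟩, ?_⟩
    rwa [Polynomial.eval_map, ← Polynomial.aeval_def]
  · rintro ⟨p, hp0, hmem, hpa⟩
    choose g hg using hmem
    refine ⟨∑ i ∈ p.support, Polynomial.monomial i (g i), ?_, ?_⟩
    all_goals
      have hmap : (∑ i ∈ p.support, Polynomial.monomial i (g i)).map (algebraMap S F) = p := by
        ext n
        rw [Polynomial.coeff_map]
        have h1 : (∑ i ∈ p.support, Polynomial.monomial i (g i)).coeff n =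
            ∑ i ∈ p.support, if i = n then g i else 0 := by
          rw [Polynomial.finset_sum_coeff]
          exact Finset.sum_congr rfl fun i _ => Polynomial.coeff_monomial ..
        rw [h1, Finset.sum_ite_eq' p.support n (fun i => g i)]
        by_cases hn : n ∈ p.support
        · simp [hn, hg]
        · simp only [hn, if_neg, if_false, map_zero]
          exact (Polynomial.notMem_support_iff.mp hn).symm
    · intro h
      rw [h, Polynomial.map_zero] at hmap
      exact hp0 hmap.symm
    · rw [Polynomial.aeval_def, ← Polynomial.eval_map, hmap]
      exact hpa

lemma closure_closure_union (X s : Set F) :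
    Subfield.closure (↑(Subfield.closure X) ∪ s) = Subfield.closure (X ∪ s) := by
  refine le_antisymm (Subfield.closure_le.mpr ?_) (Subfield.closure_mono ?_)
  · refine Set.union_subset ?_ (fun x hx => Subfield.subset_closure (Or.inr hx))
    intro x hx
    exact (Subfield.closure_le.mpr
      (fun y hy => Subfield.subset_closure (Or.inl hy) :
        X ⊆ (Subfield.closure (X ∪ s) : Set F))) hx
  · exact Set.union_subset_union_left s Subfield.subset_closure

lemma coe_Kf (X : Set F) : ((Kf X : IntermediateField ℚ F) : Set F) = ↑(Subfield.closure X) := by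
  show ((IntermediateField.adjoin ℚ X).toSubfield : Set F) = _
  rw [IntermediateField.adjoin_toSubfield]
  congr 1
  refine le_antisymm (Subfield.closure_le.mpr ?_) (Subfield.closure_mono Set.subset_union_right)
  refine Set.union_subset ?_ Subfield.subset_closure
  rintro - ⟨q, rfl⟩
  rw [eq_ratCast (algebraMap ℚ F) q]
  exact SubfieldClass.ratCast_mem _ q

lemma range_algebraMap_IF {K : Type*} [Field K] [Algebra K F] (M : IntermediateField K F) :
    Set.range (algebraMap M F) = (M : Set F) := by
  ext x
  constructor
  · rintro ⟨⟨y, hy⟩, rfl⟩; exact hy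
  · intro hx; exact ⟨⟨x, hx⟩, rfl⟩

lemma range_algebraMap_subalg {K : Type*} [CommSemiring K] [Algebra K F] (A : Subalgebra K F) :
    Set.range (algebraMap A F) = (A : Set F) := by
  ext x
  constructor
  · rintro ⟨⟨y, hy⟩, rfl⟩; exact hy
  · intro hx; exact ⟨⟨x, hx⟩, rfl⟩

lemma coe_adjoinKf (X s : Set F) :
    ((IntermediateField.adjoin (Kf X) s : IntermediateField (Kf X) F) : Set F) =
      ↑(Subfield.closure (X ∪ s)) := by
  show ((IntermediateField.adjoin (Kf X) s).toSubfield : Set F) = _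
  rw [IntermediateField.adjoin_toSubfield]
  have h1 : Set.range (algebraMap (Kf X) F) = ((Kf X : IntermediateField ℚ F) : Set F) :=
    range_algebraMap_IF _
  rw [h1, coe_Kf, ← closure_closure_union X s]

lemma algOver_iff_Kf (X : Set F) (a : F) : algOver X a ↔ IsAlgebraic (Kf X) a := by
  rw [isAlgebraic_iff_poly (algebraMap (Kf X) F).injective ↑(Subfield.closure X)
    (by rw [range_algebraMap_IF, coe_Kf]) a]
  rfl

lemma algOver_iff_IFadjoin (X s : Set F) (a : F) :
    algOver (X ∪ s) a ↔ IsAlgebraic (IntermediateField.adjoin (Kf X) s) a := by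
  rw [isAlgebraic_iff_poly (algebraMap (IntermediateField.adjoin (Kf X) s) F).injective
    ↑(Subfield.closure (X ∪ s)) (by rw [range_algebraMap_IF, coe_adjoinKf]) a]
  rfl

lemma mem_closure_finchar {B : Set F} {x : F} (h : x ∈ Subfield.closure B) :
    ∃ t : Finset F, ↑t ⊆ B ∧ x ∈ Subfield.closure (↑t : Set F) := by
  classical
  let U : Subfield F :=
    { carrier := {x | ∃ t : Finset F, ↑t ⊆ B ∧ x ∈ Subfield.closure (↑t : Set F)}
      zero_mem' := ⟨∅, by simp, Subfield.zero_mem _⟩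
      one_mem' := ⟨∅, by simp, Subfield.one_mem _⟩
      add_mem' := by
        rintro a b ⟨t1, h1, m1⟩ ⟨t2, h2, m2⟩
        refine ⟨t1 ∪ t2, by simp [Set.union_subset_iff, h1, h2], Subfield.add_mem _ ?_ ?_⟩
        · exact Subfield.closure_mono (by simp) m1
        · exact Subfield.closure_mono (by simp) m2
      mul_mem' := by
        rintro a b ⟨t1, h1, m1⟩ ⟨t2, h2, m2⟩
        refine ⟨t1 ∪ t2, by simp [Set.union_subset_iff, h1, h2], Subfield.mul_mem _ ?_ ?_⟩
        · exact Subfield.closure_mono (by simp) m1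
        · exact Subfield.closure_mono (by simp) m2
      neg_mem' := by
        rintro a ⟨t1, h1, m1⟩
        exact ⟨t1, h1, Subfield.neg_mem _ m1⟩
      inv_mem' := by
        rintro a ⟨t1, h1, m1⟩
        exact ⟨t1, h1, Subfield.inv_mem _ m1⟩ }
  have hBU : B ⊆ ↑U := by
    intro b hb
    exact ⟨{b}, by simpa using hb, Subfield.subset_closure (by simp)⟩
  exact (Subfield.closure_le.mpr hBU) h

lemma algOver_finchar {B : Set F} {a : F} (h : algOver B a) :
    ∃ t : Finset F, ↑t ⊆ B ∧ algOver ↑t a := by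
  classical
  obtain ⟨p, hp0, hmem, hpa⟩ := h
  have hch : ∀ i ∈ p.support, ∃ t : Finset F, ↑t ⊆ B ∧
      p.coeff i ∈ Subfield.closure (↑t : Set F) :=
    fun i _ => mem_closure_finchar (hmem i)
  choose tfun htB htm using hch
  refine ⟨p.support.attach.biUnion (fun i => tfun i.1 i.2), ?_, p, hp0, fun i => ?_, hpa⟩
  · intro x hx
    obtain ⟨j, -, hj⟩ := Finset.mem_biUnion.mp (Finset.mem_coe.mp hx)
    exact htB j.1 j.2 hj
  · by_cases hi : i ∈ p.support
    · refine Subfield.closure_mono ?_ (htm i hi)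
      intro x hx
      exact Finset.mem_coe.mpr (Finset.mem_biUnion.mpr ⟨⟨i, hi⟩, Finset.mem_attach _ _, hx⟩)
    · rw [Polynomial.notMem_support_iff.mp hi]
      exact Subfield.zero_mem _

lemma aeval_mem_adjoin (X s : Set F) (r : MvPolynomial s (Kf X)) :
    MvPolynomial.aeval (Subtype.val : s → F) r ∈ Algebra.adjoin (Kf X) s := by
  have h : Algebra.adjoin (Kf X) (Set.range (Subtype.val : s → F)) =
      (MvPolynomial.aeval (Subtype.val : s → F)).range :=
    Algebra.adjoin_range_eq_range_aeval _ _
  have h2 : MvPolynomial.aeval (Subtype.val : s → F) r ∈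
      Algebra.adjoin (Kf X) (Set.range (Subtype.val : s → F)) := by
    rw [h]; exact ⟨r, rfl⟩
  rwa [Subtype.range_coe] at h2

lemma algOver_iff_adjoin (X s : Set F) (a : F) :
    algOver (X ∪ s) a ↔ IsAlgebraic (Algebra.adjoin (Kf X) s) a := by
  classical
  rw [isAlgebraic_iff_poly (fun x y h => Subtype.ext h :
      Function.Injective (algebraMap (Algebra.adjoin (Kf X) s) F))
    (Algebra.adjoin (Kf X) s : Set F) (range_algebraMap_subalg _) a]
  constructor
  · rintro ⟨p, hp0, hmem, hpa⟩
    have hmem' : ∀ i, p.coeff i ∈ (IntermediateField.adjoin (Kf X) s : IntermediateField (Kf X) F) := by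
      intro i
      have := hmem i
      rw [← SetLike.mem_coe, coe_adjoinKf]
      exact this
    have hrs : ∀ i ∈ p.support, ∃ num den : F,
        num ∈ Algebra.adjoin (Kf X) s ∧ den ∈ Algebra.adjoin (Kf X) s ∧ den ≠ 0 ∧
          p.coeff i = num / den := by
      intro i hi
      obtain ⟨r, s', hrs⟩ := (IntermediateField.mem_adjoin_iff _ _).mp (hmem' i)
      refine ⟨_, _, aeval_mem_adjoin X s r, aeval_mem_adjoin X s s', ?_, hrs⟩
      intro h0
      rw [h0, div_zero] at hrs
      exact Polynomial.mem_support_iff.mp hi hrs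
    choose num den hnum hden hden0 hcoeff using hrs
    set g : F := ∏ i ∈ p.support.attach, den i.1 i.2 with hg
    have hg0 : g ≠ 0 := Finset.prod_ne_zero_iff.mpr fun i _ => hden0 i.1 i.2
    have hgmem : g ∈ Algebra.adjoin (Kf X) s :=
      Subalgebra.prod_mem _ fun i _ => hden i.1 i.2
    refine ⟨Polynomial.C g * p, mul_ne_zero (Polynomial.C_ne_zero.mpr hg0) hp0, fun i => ?_, by
      rw [Polynomial.eval_mul, hpa, mul_zero]⟩
    rw [Polynomial.coeff_C_mul]
    by_cases hi : i ∈ p.support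
    · rw [hcoeff i hi]
      have hsplit : g = den i hi * ∏ j ∈ (p.support.attach).erase ⟨i, hi⟩, den j.1 j.2 := by
        rw [hg, ← Finset.mul_prod_erase _ _ (Finset.mem_attach _ ⟨i, hi⟩)]
      rw [hsplit]
      have heq2 : den i hi * (∏ j ∈ (p.support.attach).erase ⟨i, hi⟩, den j.1 j.2) *
          (num i hi / den i hi) =
          num i hi * ∏ j ∈ (p.support.attach).erase ⟨i, hi⟩, den j.1 j.2 := by
        have h3 : den i hi * (∏ j ∈ (p.support.attach).erase ⟨i, hi⟩, den j.1 j.2) *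
            (num i hi / den i hi) =
            (num i hi * ∏ j ∈ (p.support.attach).erase ⟨i, hi⟩, den j.1 j.2) *
              (den i hi / den i hi) := by ring
        rw [h3, div_self (hden0 i hi), mul_one]
      rw [heq2]
      exact Subalgebra.mul_mem _ (hnum i hi)
        (Subalgebra.prod_mem _ fun j _ => hden j.1 j.2)
    · rw [Polynomial.notMem_support_iff.mp hi, mul_zero]
      exact Subalgebra.zero_mem _
  · rintro ⟨p, hp0, hmem, hpa⟩
    refine ⟨p, hp0, fun i => ?_, hpa⟩
    have h1 : (Algebra.adjoin (Kf X) s : Set F) ⊆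
        ((IntermediateField.adjoin (Kf X) s : IntermediateField (Kf X) F) : Set F) :=
      IntermediateField.algebra_adjoin_le_adjoin _ _
    have := h1 (hmem i)
    rwa [coe_adjoinKf] at this

lemma algOver_trans {X v : Set F} {x : F} (h : algOver (X ∪ v) x)
    (hv : ∀ b ∈ v, algOver X b) : algOver X x := by
  have hint : ∀ b ∈ v, IsIntegral (Kf X) b := fun b hb =>
    isAlgebraic_iff_isIntegral.mp ((algOver_iff_Kf X b).mp (hv b hb))
  haveI halg : Algebra.IsAlgebraic (Kf X) (IntermediateField.adjoin (Kf X) v) :=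
    IntermediateField.isAlgebraic_adjoin hint
  haveI hint' : Algebra.IsIntegral (Kf X) (IntermediateField.adjoin (Kf X) v) :=
    Algebra.isAlgebraic_iff_isIntegral.mp halg
  have hx : IsIntegral (IntermediateField.adjoin (Kf X) v) x :=
    isAlgebraic_iff_isIntegral.mp ((algOver_iff_IFadjoin X v x).mp h)
  have := isIntegral_trans (R := Kf X) (A := IntermediateField.adjoin (Kf X) v) x hx
  exact (algOver_iff_Kf X x).mpr this.isAlgebraic

lemma AI.not_algOver {X : Set F} {u : Set F} (hu : AI X u) {a : F} (ha : a ∈ u) :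
    ¬ algOver (X ∪ (u \ {a})) a := by
  classical
  set w := u \ {a} with hw
  have haw : a ∉ w := fun h => h.2 rfl
  have hins : insert a w = u := by
    rw [hw, Set.insert_diff_singleton, Set.insert_eq_self.mpr ha]
  have hu' : AlgebraicIndependent (Kf X) ((↑) : ↥(insert a w) → F) := by
    rw [hins]; exact hu
  have hwAI : AlgebraicIndependent (Kf X) ((↑) : ↥w → F) :=
    hu'.mono (Set.subset_insert a w)
  set e := Set.subtypeInsertEquivOption haw with he
  have hopt : AlgebraicIndependent (Kf X) (((↑) : ↥(insert a w) → F) ∘ e.symm) :=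
    hu'.comp e.symm e.symm.injective
  have hcomp : (((↑) : ↥(insert a w) → F) ∘ e.symm) =
      fun o : Option ↥w => o.elim a (↑) := by
    funext o
    rcases o with _ | y <;> simp [he, Set.subtypeInsertEquivOption]
  rw [hcomp] at hopt
  have ht : Transcendental (Algebra.adjoin (Kf X) (Set.range ((↑) : ↥w → F))) a :=
    (AlgebraicIndependent.option_iff.mp hopt).2
  rw [Subtype.range_coe] at ht
  intro halg
  exact ht ((algOver_iff_adjoin X w a).mp halg)

lemma AI.empty (X : Set F) : AI X (∅ : Set F) :=
  (algebraicIndependent_empty_iff (Kf X) F).mpr (algebraMap (Kf X) F).injective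

lemma AI.insert' {X u : Set F} (hu : AI X u) {a : F} (ha : ¬ algOver (X ∪ u) a) :
    AI X (insert a u) := by
  classical
  have hau : a ∉ u := fun h => ha (algOver_of_mem (Or.inr h))
  have ht : Transcendental (Algebra.adjoin (Kf X) (Set.range ((↑) : ↥u → F))) a := by
    rw [Subtype.range_coe]
    exact fun h => ha ((algOver_iff_adjoin X u a).mpr h)
  have hopt : AlgebraicIndependent (Kf X) (fun o : Option ↥u => o.elim a (↑)) :=
    AlgebraicIndependent.option_iff.mpr ⟨hu, ht⟩
  set e := Set.subtypeInsertEquivOption hau with he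
  have hc := hopt.comp e e.injective
  have hcomp : ((fun o : Option ↥u => o.elim a (↑)) ∘ e) = ((↑) : ↥(insert a u) → F) := by
    funext x
    by_cases hx : (x : F) = a <;> simp [he, Set.subtypeInsertEquivOption, hx]
  rw [hcomp] at hc
  exact hc

lemma AI_iff (X : Set F) (u : Finset F) :
    AI X ↑u ↔ ∀ a ∈ u, ¬ algOver (X ∪ (↑u \ {a})) a := by
  constructor
  · intro hu a ha
    exact hu.not_algOver (Finset.mem_coe.mpr ha)
  · induction u using Finset.induction_on with
    | empty =>
        intro _
        simpa using AI.empty X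
    | @insert a u' ha' ih =>
        intro H
        have hu' : AI X ↑u' := by
          refine ih (fun b hb halg => H b (Finset.mem_insert_of_mem hb) (halg.mono ?_))
          refine Set.union_subset_union_right X ?_
          intro x hx
          exact ⟨by simp [hx.1], hx.2⟩
        have hna : ¬ algOver (X ∪ ↑u') a := by
          intro halg
          refine H a (Finset.mem_insert_self a u') (halg.mono ?_)
          intro x hx
          rcases hx with hx | hx
          · exact Or.inl hx
          · refine Or.inr ⟨by simp [hx], ?_⟩
            intro hxa
            rw [Set.mem_singleton_iff] at hxa
            subst hxa
            exact ha' (Finset.mem_coe.mp hx)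
        have := hu'.insert' hna
        rw [Finset.coe_insert]
        exact this

lemma AI.mono_base {X X' : Set F} (h : X ⊆ X') {u : Finset F} (hu : AI X' ↑u) : AI X ↑u := by
  rw [AI_iff] at hu ⊢
  intro a ha halg
  exact hu a ha (halg.mono (Set.union_subset_union_left _ h))

open Classical in
/-- Maximal cardinality of an independent subset: the `ℕ`-valued transcendence degree. -/
noncomputable def aiCard (X : Set F) (Y : Finset F) : ℕ :=
  (Y.powerset.filter (fun u : Finset F => AI X (↑u : Set F))).sup Finset.card

lemma le_aiCard {X : Set F} {Y u : Finset F} (hu : u ⊆ Y) (h : AI X ↑u) :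
    u.card ≤ aiCard X Y := by
  classical
  exact Finset.le_sup (f := Finset.card)
    (Finset.mem_filter.mpr ⟨Finset.mem_powerset.mpr hu, h⟩)

lemma exch {X : Set F} {a b : F} (h1 : ¬ algOver X a) (h2 : algOver (X ∪ {b}) a) :
    algOver (X ∪ {a}) b := by
  by_contra h3
  rcases eq_or_ne a b with rfl | hab
  · exact h3 h2
  have hAIa : AI X {a} := by
    have := (AI.empty X).insert' (a := a) (by rwa [Set.union_empty])
    simpa using this
  have hAIab : AI X {a, b} := by
    have := hAIa.insert' (a := b) h3
    rwa [Set.pair_comm b a] at this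
  have hext := hAIab.not_algOver (a := a) (Set.mem_insert a {b})
  refine hext (h2.mono ?_)
  intro x hx
  rcases hx with hx | hx
  · exact Or.inl hx
  · rw [Set.mem_singleton_iff] at hx
    subst hx
    refine Or.inr ⟨Set.mem_insert_of_mem _ rfl, fun h => ?_⟩
    rw [Set.mem_singleton_iff] at h
    exact hab h.symm

lemma exists_aiCard (X : Set F) (Y : Finset F) :
    ∃ u : Finset F, u ⊆ Y ∧ AI X ↑u ∧ u.card = aiCard X Y ∧
      ∀ y ∈ Y, algOver (X ∪ ↑u) y := by
  classical
  obtain ⟨u, huP, hsup⟩ := Finset.exists_mem_eq_sup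
    (Y.powerset.filter (fun u : Finset F => AI X (↑u : Set F)))
    ⟨∅, Finset.mem_filter.mpr ⟨Finset.empty_mem_powerset Y, by simpa using AI.empty X⟩⟩
    Finset.card
  have huY : u ⊆ Y := Finset.mem_powerset.mp (Finset.mem_filter.mp huP).1
  have huAI : AI X (↑u : Set F) := (Finset.mem_filter.mp huP).2
  have hcard : u.card = aiCard X Y := by
    rw [aiCard]
    convert hsup.symm using 2
  refine ⟨u, huY, huAI, hcard, ?_⟩
  intro y hy
  by_contra hn
  have hyu : y ∉ u := fun h => hn (algOver_of_mem (Or.inr (Finset.mem_coe.mpr h)))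
  have hAI2 : AI X ↑(insert y u) := by
    rw [Finset.coe_insert]
    exact huAI.insert' hn
  have := le_aiCard (Finset.insert_subset hy huY) hAI2
  rw [Finset.card_insert_of_notMem hyu] at this
  omega

/-- The exchange bound: an independent set is no bigger than a set over which it is algebraic. -/
lemma card_le_of_algOver {X : Set F} {u v : Finset F} (hu : AI X ↑u)
    (h : ∀ a ∈ u, algOver (X ∪ ↑v) a) : u.card ≤ v.card := by
  classical
  suffices H : ∀ n (v : Finset F), (u \ v).card = n → (∀ a ∈ u, algOver (X ∪ ↑v) a) →
      u.card ≤ v.card from H _ v rfl h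
  intro n
  induction n using Nat.strong_induction_on with
  | _ n IH =>
  intro v hn hv
  by_cases hsub : u ⊆ v
  · exact Finset.card_le_card hsub
  obtain ⟨a, hau, hav⟩ := Finset.not_subset.mp hsub
  set P := v.powerset.filter (fun w : Finset F => algOver (X ∪ (↑w : Set F)) a) with hP
  have hPne : P.Nonempty :=
    ⟨v, Finset.mem_filter.mpr ⟨Finset.mem_powerset_self v, hv a hau⟩⟩
  obtain ⟨w₀, hw₀P, hw₀min⟩ := Finset.exists_min_image P Finset.card hPne
  have hw₀v : w₀ ⊆ v := Finset.mem_powerset.mp (Finset.mem_filter.mp hw₀P).1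
  have hw₀alg : algOver (X ∪ ↑w₀) a := (Finset.mem_filter.mp hw₀P).2
  have hbex : ∃ b ∈ w₀, b ∉ u := by
    by_contra hno
    push_neg at hno
    refine hu.not_algOver (Finset.mem_coe.mpr hau) (hw₀alg.mono ?_)
    refine Set.union_subset_union_right X ?_
    intro x hx
    refine ⟨Finset.mem_coe.mpr (hno x (Finset.mem_coe.mp hx)), fun hxa => ?_⟩
    rw [Set.mem_singleton_iff] at hxa
    exact hav (hxa ▸ hw₀v (Finset.mem_coe.mp hx))
  obtain ⟨b, hbw, hbu⟩ := hbex
  have hbv : b ∈ v := hw₀v hbw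
  have hmin : ¬ algOver (X ∪ ↑(w₀.erase b)) a := by
    intro halg
    have hmem : w₀.erase b ∈ P := Finset.mem_filter.mpr
      ⟨Finset.mem_powerset.mpr ((Finset.erase_subset b w₀).trans hw₀v), halg⟩
    have h1 := hw₀min _ hmem
    have hlt : (w₀.erase b).card < w₀.card := Finset.card_erase_lt_of_mem hbw
    omega
  have hbalg : algOver ((X ∪ ↑(w₀.erase b)) ∪ {a}) b := by
    refine exch hmin (hw₀alg.mono ?_)
    intro x hx
    rcases hx with hx | hx
    · exact Or.inl (Or.inl hx)
    · rcases eq_or_ne x b with rfl | hxb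
      · exact Or.inr rfl
      · exact Or.inl (Or.inr (Finset.mem_coe.mpr
          (Finset.mem_erase.mpr ⟨hxb, Finset.mem_coe.mp hx⟩)))
  set v' := insert a (v.erase b) with hv'
  have hcard' : v'.card = v.card := by
    rw [hv', Finset.card_insert_of_notMem
      (fun hmem => hav (Finset.mem_of_mem_erase hmem)), Finset.card_erase_of_mem hbv]
    have : 0 < v.card := Finset.card_pos.mpr ⟨b, hbv⟩
    omega
  have hbv' : algOver (X ∪ ↑v') b := by
    refine hbalg.mono ?_
    intro x hx
    rcases hx with (hx | hx) | hx
    · exact Or.inl hx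
    · refine Or.inr ?_
      simp only [hv', Finset.coe_insert, Set.mem_insert_iff]
      exact Or.inr (Finset.mem_coe.mpr
        (Finset.erase_subset_erase b hw₀v (Finset.mem_coe.mp hx)))
    · rw [Set.mem_singleton_iff] at hx
      subst hx
      exact Or.inr (by simp [hv'])
  have hvnew : ∀ c ∈ u, algOver (X ∪ ↑v') c := by
    intro c hc
    refine algOver_trans (v := {b}) ((hv c hc).mono ?_) ?_
    · intro x hx
      rcases hx with hx | hx
      · exact Or.inl (Or.inl hx)
      · rcases eq_or_ne x b with rfl | hxb
        · exact Or.inr rfl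
        · refine Or.inl (Or.inr ?_)
          simp only [hv', Finset.coe_insert, Set.mem_insert_iff]
          exact Or.inr (Finset.mem_coe.mpr
            (Finset.mem_erase.mpr ⟨hxb, Finset.mem_coe.mp hx⟩))
    · intro z hz
      rw [Set.mem_singleton_iff] at hz
      subst hz
      exact hbv'
  have hndrop : (u \ v').card < n := by
    have hss : u \ v' ⊆ (u \ v).erase a := by
      intro x hx
      obtain ⟨hxu, hxv'⟩ := Finset.mem_sdiff.mp hx
      refine Finset.mem_erase.mpr ⟨?_, Finset.mem_sdiff.mpr ⟨hxu, ?_⟩⟩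
      · intro hxa
        subst hxa
        exact hxv' (by simp [hv'])
      · intro hxv
        refine hxv' ?_
        simp only [hv', Finset.mem_insert]
        exact Or.inr (Finset.mem_erase.mpr ⟨fun hxb => (hxb ▸ hbu) hxu, hxv⟩)
    have h1 := Finset.card_le_card hss
    have h2 : ((u \ v).erase a).card < (u \ v).card :=
      Finset.card_erase_lt_of_mem (Finset.mem_sdiff.mpr ⟨hau, hav⟩)
    omega
  have := IH _ hndrop v' rfl hvnew
  omega

lemma aiCard_union_le (X : Set F) (Y Z : Finset F) :
    aiCard X (Y ∪ Z) ≤ aiCard X Y + aiCard (X ∪ ↑Y) Z := by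
  classical
  obtain ⟨u, huYZ, huAI, hucard, -⟩ := exists_aiCard X (Y ∪ Z)
  obtain ⟨uY, hY, hYAI, hYcard, hYspan⟩ := exists_aiCard X Y
  obtain ⟨uZ, hZ, hZAI, hZcard, hZspan⟩ := exists_aiCard (X ∪ ↑Y) Z
  have key : ∀ a ∈ u, algOver (X ∪ (↑(uY ∪ uZ) : Set F)) a := by
    intro a ha
    rcases Finset.mem_union.mp (huYZ ha) with haY | haZ
    · refine (hYspan a haY).mono ?_
      refine Set.union_subset_union_right X ?_
      intro x hx
      exact Finset.mem_coe.mpr (Finset.mem_union_left _ (Finset.mem_coe.mp hx))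
    · refine algOver_trans (v := (↑Y : Set F)) ((hZspan a haZ).mono ?_)
        (fun y hy => (hYspan y (Finset.mem_coe.mp hy)).mono ?_)
      · intro x hx
        rcases hx with (hx | hx) | hx
        · exact Or.inl (Or.inl hx)
        · exact Or.inr hx
        · exact Or.inl (Or.inr (Finset.mem_coe.mpr
            (Finset.mem_union_right _ (Finset.mem_coe.mp hx))))
      · refine Set.union_subset_union_right X ?_
        intro x hx
        exact Finset.mem_coe.mpr (Finset.mem_union_left _ (Finset.mem_coe.mp hx))
  have h1 := card_le_of_algOver huAI key
  have h2 := Finset.card_union_le uY uZ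
  omega

lemma ai_union_of_ai {X : Set F} {Ys : Set F} {uY uZ : Finset F}
    (hYAI : AI X ↑uY) (hYsub : (↑uY : Set F) ⊆ Ys) (hZAI : AI (X ∪ Ys) ↑uZ) :
    AI X ↑(uY ∪ uZ) := by
  classical
  suffices H : ∀ w : Finset F, w ⊆ uZ → AI X ↑(uY ∪ w) from H uZ (Finset.Subset.refl _)
  intro w
  induction w using Finset.induction_on with
  | empty => intro _; simpa using hYAI
  | @insert b w hbw ih =>
      intro hsub
      rw [Finset.insert_subset_iff] at hsub
      have hIH := ih hsub.2
      have hnb : ¬ algOver (X ∪ (↑(uY ∪ w) : Set F)) b := by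
        intro halg
        refine (AI_iff (X ∪ Ys) uZ).mp hZAI b hsub.1 (halg.mono ?_)
        intro x hx
        rcases hx with hx | hx
        · exact Or.inl (Or.inl hx)
        · rcases Finset.mem_union.mp (Finset.mem_coe.mp hx) with hx' | hx'
          · exact Or.inl (Or.inr (hYsub (Finset.mem_coe.mpr hx')))
          · refine Or.inr ⟨Finset.mem_coe.mpr (hsub.2 hx'), fun hxb => ?_⟩
            rw [Set.mem_singleton_iff] at hxb
            exact hbw (hxb ▸ hx')
      have := hIH.insert' hnb
      rw [Finset.union_insert, Finset.coe_insert]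
      exact this

lemma not_mem_of_ai_over {X Ys : Set F} {uZ : Finset F} (hZAI : AI (X ∪ Ys) ↑uZ)
    {b : F} (hb : b ∈ uZ) : b ∉ Ys := by
  intro hbY
  exact (AI_iff (X ∪ Ys) uZ).mp hZAI b hb (algOver_of_mem (Or.inl (Or.inr hbY)))

lemma le_aiCard_union (X : Set F) (Y Z : Finset F) :
    aiCard X Y + aiCard (X ∪ ↑Y) Z ≤ aiCard X (Y ∪ Z) := by
  classical
  obtain ⟨uY, hY, hYAI, hYcard, -⟩ := exists_aiCard X Y
  obtain ⟨uZ, hZ, hZAI, hZcard, -⟩ := exists_aiCard (X ∪ ↑Y) Z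
  have hAI : AI X ↑(uY ∪ uZ) :=
    ai_union_of_ai hYAI (fun x hx => Finset.mem_coe.mpr (hY (Finset.mem_coe.mp hx))) hZAI
  have hdisj : Disjoint uY uZ := by
    rw [Finset.disjoint_left]
    intro x hxY hxZ
    exact not_mem_of_ai_over hZAI hxZ (Finset.mem_coe.mpr (hY hxY))
  have hcard : (uY ∪ uZ).card = uY.card + uZ.card := Finset.card_union_of_disjoint hdisj
  have hle := le_aiCard (Finset.union_subset_union hY hZ) hAI
  omega

lemma aiCard_mono_base {X X' : Set F} (h : X ⊆ X') (Y : Finset F) :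
    aiCard X' Y ≤ aiCard X Y := by
  obtain ⟨u, hu, hAI, hcard, -⟩ := exists_aiCard X' Y
  exact hcard ▸ le_aiCard hu (hAI.mono_base h)

lemma aiCard_base_algebraic {X W : Set F} (hW : ∀ b ∈ W, algOver X b) (Y : Finset F) :
    aiCard X Y ≤ aiCard (X ∪ W) Y := by
  obtain ⟨u, huY, huAI, hucard, -⟩ := exists_aiCard X Y
  have hAI : AI (X ∪ W) ↑u := by
    rw [AI_iff]
    intro a ha halg
    refine (AI_iff X u).mp huAI a ha ?_
    refine algOver_trans (v := W) (halg.mono ?_) (fun b hb => (hW b hb).mono ?_)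
    · intro x hx
      rcases hx with (hx | hx) | hx
      · exact Or.inl (Or.inl hx)
      · exact Or.inr hx
      · exact Or.inl (Or.inr hx)
    · exact Set.subset_union_left
  exact hucard ▸ le_aiCard huY hAI

lemma aiCard_absorb {X : Set F} {Y W : Finset F} (hW : ∀ w ∈ W, algOver (X ∪ ↑Y) w) :
    aiCard X (Y ∪ W) ≤ aiCard X Y := by
  classical
  obtain ⟨u, huYW, huAI, hucard, -⟩ := exists_aiCard X (Y ∪ W)
  obtain ⟨uY, hY, hYAI, hYcard, hYspan⟩ := exists_aiCard X Y
  have key : ∀ a ∈ u, algOver (X ∪ (↑uY : Set F)) a := by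
    intro a ha
    rcases Finset.mem_union.mp (huYW ha) with haY | haW
    · exact hYspan a haY
    · refine algOver_trans (v := (↑Y : Set F)) ((hW a haW).mono ?_)
        (fun y hy => hYspan y (Finset.mem_coe.mp hy))
      intro x hx
      rcases hx with hx | hx
      · exact Or.inl (Or.inl hx)
      · exact Or.inr hx
  have h1 := card_le_of_algOver huAI key
  omega

lemma aiCard_mono_Y {X : Set F} {Y Y' : Finset F} (h : Y ⊆ Y') :
    aiCard X Y ≤ aiCard X Y' := by
  obtain ⟨u, hu, hAI, hcard, -⟩ := exists_aiCard X Y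
  exact hcard ▸ le_aiCard (hu.trans h) hAI

lemma td_eq_aiCard (X : Set F) (Y : Finset F) : td F X ↑Y = (aiCard X Y : Cardinal) := by
  apply le_antisymm
  · rw [td]
    refine ciSup_le' ?_
    rintro ⟨sset, hsub, hAI⟩
    have hfin : sset.Finite := Y.finite_toSet.subset hsub
    have h0 : #↑sset = (hfin.toFinset.card : Cardinal) := by
      rw [← Cardinal.mk_coe_finset]
      exact (congrArg (fun s : Set F => #↑s) hfin.coe_toFinset).symm
    rw [h0]
    refine Nat.cast_le.mpr (le_aiCard (fun x hx => ?_) ?_)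
    · exact Finset.mem_coe.mp (hsub (hfin.mem_toFinset.mp hx))
    · exact (hfin.coe_toFinset).symm ▸ hAI
  · obtain ⟨u, huY, huAI, hucard, -⟩ := exists_aiCard X Y
    have hbdd : BddAbove (Set.range (fun p : {s : Set F // s ⊆ (↑Y : Set F) ∧
        AlgebraicIndependent (IntermediateField.adjoin ℚ X) (fun y : s => (y : F))} =>
          Cardinal.mk p.1)) := by
      refine ⟨#↑(↑Y : Set F), ?_⟩
      rintro - ⟨p, rfl⟩
      exact Cardinal.mk_le_mk_of_subset p.2.1
    have hle := le_ciSup hbdd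
      (⟨↑u, Finset.coe_subset.mpr huY, huAI⟩ : {s : Set F // s ⊆ (↑Y : Set F) ∧
        AlgebraicIndependent (IntermediateField.adjoin ℚ X) (fun y : s => (y : F))})
    calc (aiCard X Y : Cardinal) = (u.card : Cardinal) := by rw [hucard]
      _ = #↑(↑u : Set F) := (Cardinal.mk_coe_finset (s := u)).symm
      _ ≤ td F X ↑Y := hle

lemma tdN_eq_aiCard (X : Set F) (Y : Finset F) : tdN F X ↑Y = aiCard X Y := by
  rw [tdN, td_eq_aiCard, Cardinal.toNat_natCast]

/- ===== linear dimension lemmas ===== -/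

lemma ldim_le_card (X : Set F) (Y : Finset F) : ldim F X ↑Y ≤ (Y.card : Cardinal) := by
  refine le_trans (rank_span_le _) (le_trans Cardinal.mk_image_le ?_)
  simp

lemma ldim_lt_aleph0 (X : Set F) (Y : Finset F) : ldim F X ↑Y < Cardinal.aleph0 :=
  lt_of_le_of_lt (ldim_le_card X Y) (Cardinal.nat_lt_aleph0 _)

lemma ldimN_le_of_ldim_le {X X' : Set F} {Y Z : Finset F} {n : ℕ}
    (h : ldim F X ↑Y ≤ ldim F X' ↑Z + (n : Cardinal)) :
    ldimN F X ↑Y ≤ ldimN F X' ↑Z + n := by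
  have hfin : ldim F X' ↑Z + (n : Cardinal) < Cardinal.aleph0 :=
    Cardinal.add_lt_aleph0 (ldim_lt_aleph0 X' Z) (Cardinal.nat_lt_aleph0 n)
  have := Cardinal.toNat_le_toNat h hfin
  rwa [Cardinal.toNat_add (ldim_lt_aleph0 X' Z) (Cardinal.nat_lt_aleph0 n),
    Cardinal.toNat_natCast] at this

lemma ldim_le_of_subset_span {X : Set F} {Y Z : Finset F}
    (h : ∀ y ∈ Y, (y : F) ∈ Submodule.span ℚ (X ∪ ↑Z)) :
    ldim F X ↑Y ≤ ldim F X ↑Z := by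
  apply Submodule.rank_mono
  rw [Submodule.span_le]
  rintro - ⟨y, hy, rfl⟩
  have hy' := h y hy
  rw [Set.union_comm, Submodule.span_union] at hy'
  obtain ⟨u, hu, v, hv, huv⟩ := Submodule.mem_sup.mp hy'
  have : (Submodule.span ℚ X).mkQ y = (Submodule.span ℚ X).mkQ u := by
    rw [← huv, map_add]
    have : (Submodule.span ℚ X).mkQ v = 0 := (Submodule.Quotient.mk_eq_zero _).mpr hv
    rw [this, add_zero]
  rw [this]
  have : (Submodule.span ℚ X).mkQ u ∈ Submodule.map (Submodule.span ℚ X).mkQ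
      (Submodule.span ℚ (↑Z : Set F)) := Submodule.mem_map_of_mem hu
  rwa [Submodule.map_span] at this

lemma ldimN_le_of_subset_span {X : Set F} {Y Z : Finset F}
    (h : ∀ y ∈ Y, (y : F) ∈ Submodule.span ℚ (X ∪ ↑Z)) :
    ldimN F X ↑Y ≤ ldimN F X ↑Z := by
  have := ldimN_le_of_ldim_le (X := X) (X' := X) (Y := Y) (Z := Z) (n := 0)
    (by rw [Nat.cast_zero, add_zero]; exact ldim_le_of_subset_span h)
  simpa using this

lemma ldimN_union_le (X : Set F) (Y Z : Finset F) :
    ldimN F X ↑(Y ∪ Z) ≤ Y.card + ldimN F X ↑Z := by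
  have h : ldim F X ↑(Y ∪ Z) ≤ ldim F X ↑Z + (Y.card : Cardinal) := by
    unfold ldim
    rw [Finset.coe_union, Set.image_union, Submodule.span_union]
    refine le_trans (Submodule.rank_add_le_rank_add_rank _ _) ?_
    refine le_trans (add_le_add_left (ldim_le_card X Y) _) (le_of_eq (add_comm _ _))
  have := ldimN_le_of_ldim_le h
  omega

lemma ldimN_mono_base {X X' : Set F} (h : X ⊆ X') (Y : Finset F) :
    ldimN F X' ↑Y ≤ ldimN F X ↑Y := by
  have hle : Submodule.span ℚ X ≤ (Submodule.span ℚ X').comap LinearMap.id := by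
    simpa using Submodule.span_mono h
  set φ := Submodule.mapQ (Submodule.span ℚ X) (Submodule.span ℚ X') LinearMap.id hle with hφ
  have hcomm : ∀ y : F, (Submodule.span ℚ X').mkQ y = φ ((Submodule.span ℚ X).mkQ y) := by
    intro y
    simp [hφ, Submodule.mkQ_apply, Submodule.mapQ_apply]
  have himg : (Submodule.span ℚ X').mkQ '' (↑Y : Set F) =
      φ '' ((Submodule.span ℚ X).mkQ '' (↑Y : Set F)) := by
    rw [Set.image_image]
    exact Set.image_congr fun y _ => hcomm y
  have hrank : ldim F X' ↑Y ≤ ldim F X ↑Y := by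
    unfold ldim
    rw [himg, ← Submodule.map_span]
    exact rank_map_le φ _
  have := ldimN_le_of_ldim_le (X := X') (X' := X) (Y := Y) (Z := Y) (n := 0)
    (by rw [Nat.cast_zero, add_zero]; exact hrank)
  simpa using this

/-- Step A: linear witnesses. -/
lemma exists_linear_witnesses (V : Submodule ℚ F) (Kset : Set F) (sD : Finset F) :
    ∃ c : Finset F, ↑c ⊆ (V : Set F) ∧
      (∀ x ∈ c, x ∈ Submodule.span ℚ ((↑sD : Set F) ∪ Kset)) ∧
      ∀ X : Set F, Kset ⊆ X →
        ldimN F X ↑sD ≤ ldimN F ((V : Set F) ∪ Kset) ↑sD + ldimN F X ↑c := by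
  classical
  set Q := Submodule.span ℚ ((V : Set F) ∪ Kset) with hQ
  set q := Q.mkQ with hq
  obtain ⟨t, hts, hsp, hli⟩ := exists_linearIndependent ℚ (q '' (↑sD : Set F))
  have htfin : t.Finite := Set.Finite.subset (Set.Finite.image _ (Finset.finite_toSet sD)) hts
  have hpre : ∀ v ∈ htfin.toFinset, ∃ x ∈ sD, q x = v := by
    intro v hv
    obtain ⟨x, hx, hxv⟩ := hts (htfin.mem_toFinset.mp hv)
    exact ⟨x, hx, hxv⟩
  choose g hg1 hg2 using hpre
  set b : Finset F := htfin.toFinset.attach.image (fun v => g v.1 v.2) with hb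
  have hbsD : b ⊆ sD := by
    intro x hx
    obtain ⟨v, -, rfl⟩ := Finset.mem_image.mp hx
    exact hg1 _ _
  have hbcard : b.card ≤ htfin.toFinset.card := by
    refine le_trans (Finset.card_image_le) (by simp)
  -- every element of sD decomposes
  have hdec : ∀ x ∈ sD, ∃ d ∈ V, ∃ κ ∈ Submodule.span ℚ Kset,
      ∃ y ∈ Submodule.span ℚ (↑b : Set F), (x : F) = d + κ + y := by
    intro x hx
    have h1 : q x ∈ Submodule.span ℚ t := by
      rw [hsp]
      exact Submodule.subset_span ⟨x, hx, rfl⟩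
    have h2 : Submodule.span ℚ t ≤ Submodule.span ℚ (q '' (↑b : Set F)) := by
      apply Submodule.span_mono
      intro v hv
      refine ⟨g v (htfin.mem_toFinset.mpr hv), ?_, hg2 _ _⟩
      exact Finset.mem_coe.mpr (Finset.mem_image.mpr ⟨⟨v, htfin.mem_toFinset.mpr hv⟩,
        Finset.mem_attach _ _, rfl⟩)
    have h3 : q x ∈ Submodule.map q (Submodule.span ℚ (↑b : Set F)) := by
      rw [Submodule.map_span]; exact h2 h1
    obtain ⟨y, hy, hyx⟩ := h3
    have hxy : (x : F) - y ∈ Q := by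
      rw [← Submodule.Quotient.mk_eq_zero Q]
      have : q (x - y) = 0 := by rw [map_sub, hyx, sub_self]
      simpa [hq, Submodule.mkQ_apply] using this
    have hxyQ : (x : F) - y ∈ V ⊔ Submodule.span ℚ Kset := by
      rwa [hQ, Submodule.span_union, Submodule.span_eq] at hxy
    obtain ⟨d, hd, κ, hκ, hdκ⟩ := Submodule.mem_sup.mp hxyQ
    exact ⟨d, hd, κ, hκ, y, hy, by linear_combination hdκ.symm⟩
  choose dfun hdV hκfun hκmem hyfun hymem heq using hdec
  set c : Finset F := sD.attach.image (fun x => dfun x.1 x.2) with hc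
  have hcV : (↑c : Set F) ⊆ (V : Set F) := by
    intro x hx
    obtain ⟨v, -, rfl⟩ := Finset.mem_image.mp (Finset.mem_coe.mp hx)
    exact hdV _ _
  refine ⟨c, hcV, ?_, ?_⟩
  · intro x hx
    obtain ⟨⟨v, hv⟩, -, rfl⟩ := Finset.mem_image.mp hx
    have hxsp : (v : F) ∈ Submodule.span ℚ ((↑sD : Set F) ∪ Kset) :=
      Submodule.subset_span (Or.inl (Finset.mem_coe.mpr hv))
    have hysp : hyfun v hv ∈ Submodule.span ℚ ((↑sD : Set F) ∪ Kset) := by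
      refine Submodule.span_mono ?_ (hymem v hv)
      exact fun z hz => Or.inl (Finset.coe_subset.mpr hbsD hz)
    have hκsp : hκfun v hv ∈ Submodule.span ℚ ((↑sD : Set F) ∪ Kset) :=
      Submodule.span_mono Set.subset_union_right (hκmem v hv)
    have hde : dfun v hv = v - hκfun v hv - hyfun v hv := by
      linear_combination (heq v hv).symm
    rw [hde]
    exact Submodule.sub_mem _ (Submodule.sub_mem _ hxsp hκsp) hysp
  · intro X hKX
    have key1 : ∀ x ∈ sD, (x : F) ∈ Submodule.span ℚ (X ∪ ↑(b ∪ c)) := by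
      intro x hx
      have h1 : dfun x hx ∈ Submodule.span ℚ (X ∪ ↑(b ∪ c)) := by
        refine Submodule.subset_span (Or.inr ?_)
        refine Finset.mem_coe.mpr (Finset.mem_union_right _ ?_)
        exact Finset.mem_image.mpr ⟨⟨x, hx⟩, Finset.mem_attach _ _, rfl⟩
      have h2 : hκfun x hx ∈ Submodule.span ℚ (X ∪ ↑(b ∪ c)) := by
        refine Submodule.span_mono (fun z hz => Or.inl (hKX hz)) (hκmem x hx)
      have h3 : hyfun x hx ∈ Submodule.span ℚ (X ∪ ↑(b ∪ c)) := by
        refine Submodule.span_mono (fun z hz => Or.inr ?_) (hymem x hx)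
        exact Finset.mem_coe.mpr (Finset.mem_union_left _ (Finset.mem_coe.mp hz))
      rw [heq x hx]
      exact Submodule.add_mem _ (Submodule.add_mem _ h1 h2) h3
    have key2 := ldimN_le_of_subset_span key1
    have key3 := ldimN_union_le X b c
    have key4 : b.card ≤ ldimN F ((V : Set F) ∪ Kset) ↑sD := by
      have h0 : (htfin.toFinset.card : Cardinal) = #↑t := by
        rw [← Cardinal.mk_coe_finset]
        exact congrArg (fun s : Set (F ⧸ Q) => #↑s) htfin.coe_toFinset
      have h1 : (htfin.toFinset.card : Cardinal) = Module.rank ℚ (Submodule.span ℚ t) := by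
        rw [h0, rank_span_set hli]
      have h2 : ldim F ((V : Set F) ∪ Kset) ↑sD = (htfin.toFinset.card : Cardinal) := by
        rw [h1, hsp]; rfl
      have : ldimN F ((V : Set F) ∪ Kset) ↑sD = htfin.toFinset.card := by
        rw [ldimN, h2, Cardinal.toNat_natCast]
      omega
    omega

/- ===== exponential lemmas ===== -/

lemma PEField.exp_neg (E : PEField F) {a : F} (ha : a ∈ E.D) : E.exp (-a) = (E.exp a)⁻¹ := by
  have h := E.exp_add (-a) (E.D.neg_mem ha) a ha
  rw [neg_add_cancel, E.exp_zero] at h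
  exact eq_inv_of_mul_eq_one_left h.symm

lemma PEField.mul_mem_D (E : PEField F) {a : F} (ha : a ∈ E.D) (q : ℚ) :
    (q : F) * a ∈ E.D := by
  have : (q : F) * a = q • a := by rw [Rat.smul_def]
  rw [this]; exact E.D.smul_mem q ha

lemma PEField.exp_nsmul (E : PEField F) {a : F} (ha : a ∈ E.D) (n : ℕ) :
    E.exp ((n : F) * a) = E.exp a ^ n := by
  induction n with
  | zero => simpa using E.exp_zero
  | succ n ih =>
      have hna : (n : F) * a ∈ E.D := by exact_mod_cast E.mul_mem_D ha (n : ℚ)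
      have : ((n + 1 : ℕ) : F) * a = (n : F) * a + a := by push_cast; ring
      rw [this, E.exp_add _ hna a ha, ih, pow_succ]

lemma PEField.exp_zsmul (E : PEField F) {a : F} (ha : a ∈ E.D) (m : ℤ) :
    E.exp ((m : F) * a) = E.exp a ^ m := by
  rcases m with m | m
  · rw [Int.ofNat_eq_coe, zpow_natCast]
    exact_mod_cast E.exp_nsmul ha m
  · have hm : ((Int.negSucc m : ℤ) : F) * a = -(((m + 1 : ℕ) : F) * a) := by
      push_cast [Int.negSucc_eq]; ring
    have hd : ((m + 1 : ℕ) : F) * a ∈ E.D := by exact_mod_cast E.mul_mem_D ha ((m + 1 : ℕ) : ℚ)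
    rw [hm, E.exp_neg hd, E.exp_nsmul ha, zpow_negSucc]

lemma algOver_of_pow_mem {B : Set F} {a : F} {N : ℕ} (hN : 0 < N)
    (h : a ^ N ∈ Subfield.closure B) : algOver B a := by
  refine ⟨X ^ N - C (a ^ N), X_pow_sub_C_ne_zero hN _, fun i => ?_, by simp⟩
  rw [Polynomial.coeff_sub, Polynomial.coeff_X_pow, Polynomial.coeff_C]
  by_cases h1 : i = N <;> by_cases h2 : i = 0 <;>
    simp_all [neg_mem, h, Subfield.one_mem, Subfield.zero_mem, hN.ne']

lemma exp_span_root (E : PEField F) {Z : Set F} (hZ : Z ⊆ ↑E.D) {c : F}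
    (hc : c ∈ Submodule.span ℚ Z) :
    c ∈ E.D ∧ ∃ N : ℕ, 0 < N ∧ E.exp c ^ N ∈ Subfield.closure (E.exp '' Z) := by
  induction hc using Submodule.span_induction with
  | mem z hz =>
      exact ⟨hZ hz, 1, one_pos, by
        rw [pow_one]; exact Subfield.subset_closure ⟨z, hz, rfl⟩⟩
  | zero =>
      exact ⟨E.D.zero_mem, 1, one_pos, by rw [pow_one, E.exp_zero]; exact Subfield.one_mem _⟩
  | add x y _ _ hx hy =>
      obtain ⟨hxD, Nx, hNx, hxm⟩ := hx
      obtain ⟨hyD, Ny, hNy, hym⟩ := hy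
      refine ⟨E.D.add_mem hxD hyD, Nx * Ny, Nat.mul_pos hNx hNy, ?_⟩
      rw [E.exp_add x hxD y hyD, mul_pow, pow_mul, pow_mul]
      refine Subfield.mul_mem _ (Subfield.pow_mem _ hxm _) ?_
      rw [← pow_mul, mul_comm Nx Ny, pow_mul]
      exact Subfield.pow_mem _ hym _
  | smul q x _ hx =>
      obtain ⟨hxD, N, hN, hxm⟩ := hx
      have hqx : q • x = (q : F) * x := by rw [Rat.smul_def]
      have hqxD : q • x ∈ E.D := E.D.smul_mem q hxD
      refine ⟨hqxD, q.den * N, Nat.mul_pos q.pos hN, ?_⟩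
      have h1 : E.exp (q • x) ^ (q.den * N) = (E.exp (q • x) ^ q.den) ^ N := pow_mul _ _ _
      have h2 : E.exp (q • x) ^ q.den = E.exp ((q.den : F) * (q • x)) :=
        (E.exp_nsmul hqxD q.den).symm
      have h3 : (q.den : F) * (q • x) = ((q.num : ℤ) : F) * x := by
        rw [hqx]
        have h5 : ((q.den : ℚ) : F) * ((q : ℚ) : F) = ((q.num : ℚ) : F) := by
          rw [← Rat.cast_mul, mul_comm, Rat.mul_den_eq_num]
        push_cast at h5 ⊢
        rw [← mul_assoc, h5]
      have h4 : E.exp (((q.num : ℤ) : F) * x) = E.exp x ^ q.num := E.exp_zsmul hxD q.num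
      rw [h1, h2, h3, h4, ← zpow_natCast (E.exp x ^ q.num) N, ← zpow_mul,
        mul_comm q.num (N : ℤ), zpow_mul, zpow_natCast]
      exact zpow_mem hxm _

end SSInfra

/-- semi-strongness is transitive. -/
theorem semiStrong_trans
    {F : Type*} [Field F] [CharZero F] (E : PEField F)
    (F₁ F₂ F₃ : ESub E)
    (h12 : F₁.le F₂) (h23 : F₂.le F₃)
    (hs12 : SemiStrong E F₁ F₂) (hs23 : SemiStrong E F₂ F₃) :
    SemiStrong E F₁ F₃ := by
  classical
  obtain ⟨hc12, hd12⟩ := h12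
  obtain ⟨hc23, hd23⟩ := h23
  obtain ⟨hs12Δ, hs12k⟩ := hs12
  obtain ⟨hs23Δ, hs23k⟩ := hs23
  have hk12 : F₁.kerSet ⊆ F₂.kerSet := fun x hx => ⟨hd12 hx.1, hx.2⟩
  have hk23 : F₂.kerSet ⊆ F₃.kerSet := fun x hx => ⟨hd23 hx.1, hx.2⟩
  constructor
  · intro s hs
    set A1 : Set F := ↑F₁.carrier with hA1
    set A2 : Set F := ↑F₂.carrier with hA2
    set K2 : Set F := F₂.kerSet with hK2
    set K3 : Set F := F₃.kerSet with hK3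
    have hK3D : K3 ⊆ (F₃.dom : Set F) := fun x hx => hx.1
    set sD : Finset F := s.filter (fun x => x ∈ F₃.dom) with hsD_def
    have hsDs : ∀ x ∈ sD, x ∈ s := fun x hx => (Finset.mem_filter.mp hx).1
    have hsDdom : ∀ x ∈ sD, x ∈ F₃.dom := fun x hx => (Finset.mem_filter.mp hx).2
    have hsD_coe : (↑s ∩ (F₃.dom : Set F) : Set F) = ↑sD := by
      ext x; simp [hsD_def]
    set Sfin : Finset F := s ∪ sD.image E.exp with hSfin
    have hS_coe : (↑s ∪ E.exp '' (↑s ∩ (F₃.dom : Set F)) : Set F) = ↑Sfin := by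
      rw [hsD_coe]; ext x; simp [hSfin]
    -- hs23 inequality at s
    have h23s : ldimN F ((F₂.dom : Set F) ∪ K3) ↑sD ≤ tdN F (A2 ∪ K3) ↑Sfin := by
      have h := hs23Δ s hs
      simp only [Delta, sub_nonneg] at h
      rw [hS_coe, hsD_coe] at h
      exact_mod_cast h
    -- linear witnesses
    obtain ⟨c, hcV, hcspan, hcldim⟩ := exists_linear_witnesses F₂.dom K3 sD
    set Wfin : Finset F := c ∪ c.image E.exp with hW
    have hW_coe : ((↑c : Set F) ∪ E.exp '' (↑c : Set F)) = ↑Wfin := by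
      ext x; simp [hW]
    have hWA2 : (↑Wfin : Set F) ⊆ A2 := by
      intro x hx
      rw [← hW_coe] at hx
      rcases hx with hx | ⟨y, hy, rfl⟩
      · exact F₂.dom_sub (hcV hx)
      · exact F₂.exp_mem y (hcV hy)
    -- hs12 inequality at c
    have h12c : ldimN F ((F₁.dom : Set F) ∪ K2) ↑c ≤ tdN F (A1 ∪ K2) ↑Wfin := by
      have hc2 : (↑c : Set F) ⊆ (F₂.carrier : Set F) := fun x hx => F₂.dom_sub (hcV hx)
      have h := hs12Δ c hc2
      simp only [Delta, sub_nonneg] at h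
      rw [Set.inter_eq_left.mpr hcV, hW_coe] at h
      exact_mod_cast h
    -- kernel swap
    have hswap : aiCard (A1 ∪ K2) Wfin ≤ aiCard (A1 ∪ K3) Wfin := by
      obtain ⟨u, huW, huAI, hucard, -⟩ := exists_aiCard (A1 ∪ K2) Wfin
      have huA2 : (↑u : Set F) ⊆ A2 := fun x hx => hWA2 (Finset.coe_subset.mpr huW hx)
      suffices hAI3 : AI (A1 ∪ K3) (↑u : Set F) by
        rw [← hucard]; exact le_aiCard huW hAI3
      rw [AI_iff]
      intro a ha halg
      obtain ⟨t, htsub, htalg⟩ := algOver_finchar halg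
      set tA : Finset F := t.filter (fun x => x ∈ A1) with htA
      have htA1 : (↑tA : Set F) ⊆ A1 := by
        intro x hx
        simp only [htA, Finset.coe_filter, Set.mem_setOf_eq] at hx
        exact hx.2
      have htalg' : algOver ((K3 ∪ ↑tA) ∪ ((↑u : Set F) \ {a})) a := by
        refine htalg.mono ?_
        intro x hx
        rcases htsub hx with (hx1 | hx1) | hx2
        · refine Or.inl (Or.inr ?_)
          simp only [htA, Finset.coe_filter, Set.mem_setOf_eq]
          exact ⟨hx, hx1⟩
        · exact Or.inl (Or.inl hx1)
        · exact Or.inr hx2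
      have h1 : aiCard K2 tA + u.card ≤ aiCard K2 (tA ∪ u) := by
        refine le_trans (add_le_add_right ?_ _) (le_aiCard_union K2 tA u)
        refine le_aiCard (Finset.Subset.refl u) (huAI.mono_base ?_)
        intro x hx
        rcases hx with hx | hx
        · exact Or.inr hx
        · exact Or.inl (htA1 hx)
      have h2 : aiCard (K2 ∪ K3) (tA ∪ u) = aiCard K2 (tA ∪ u) := by
        have h := hs23k (tA ∪ u) (by
          intro x hx
          rcases Finset.mem_union.mp hx with h' | h'
          · exact hc12 (htA1 (Finset.mem_coe.mpr h'))
          · exact huA2 (Finset.mem_coe.mpr h'))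
        rw [tdN_eq_aiCard, tdN_eq_aiCard] at h
        exact h
      have h3 : aiCard (K2 ∪ K3) (tA ∪ u) ≤ aiCard K2 tA + aiCard ((K2 ∪ K3) ∪ ↑tA) u :=
        le_trans (aiCard_union_le _ tA u)
          (add_le_add_left (aiCard_mono_base Set.subset_union_left tA) _)
      have h4 : aiCard ((K2 ∪ K3) ∪ ↑tA) u < u.card := by
        obtain ⟨u', hu'sub, hu'AI, hu'card, -⟩ := exists_aiCard ((K2 ∪ K3) ∪ ↑tA) u
        rw [← hu'card]
        rcases eq_or_ne u' u with rfl | hne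
        · exact absurd (htalg'.mono (by
            intro x hx
            rcases hx with (hx | hx) | hx
            · exact Or.inl (Or.inl (Or.inr hx))
            · exact Or.inl (Or.inr hx)
            · exact Or.inr hx))
            ((AI_iff _ _).mp hu'AI a ha)
        · exact Finset.card_lt_card (HasSubset.Subset.ssubset_of_ne hu'sub hne)
      omega
    -- absorption hypothesis
    have hWabs : ∀ w ∈ Wfin, algOver ((A1 ∪ K3) ∪ (↑Sfin : Set F)) w := by
      have hZD : ((↑sD : Set F) ∪ K3) ⊆ ↑E.D := by
        intro x hx
        rcases hx with hx | hx
        · exact F₃.dom_le (hsDdom x (Finset.mem_coe.mp hx))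
        · exact F₃.dom_le (hK3D hx)
      have hsub : ((↑sD : Set F) ∪ K3) ⊆ (A1 ∪ K3) ∪ ↑Sfin := by
        intro x hx
        rcases hx with hx | hx
        · refine Or.inr ?_
          have : x ∈ Sfin := Finset.mem_union_left _ (hsDs x (Finset.mem_coe.mp hx))
          exact Finset.mem_coe.mpr this
        · exact Or.inl (Or.inr hx)
      intro w hw
      rcases Finset.mem_union.mp hw with hw | hw
      · exact algOver_of_mem_closure
          (span_le_subfield (fun x hx => Subfield.subset_closure (hsub hx))
            (hcspan w hw))
      · obtain ⟨y, hy, rfl⟩ := Finset.mem_image.mp hw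
        obtain ⟨-, N, hN, hmem⟩ := exp_span_root E hZD (hcspan y hy)
        refine algOver_of_pow_mem hN ?_
        refine (Subfield.closure_le.mpr ?_) hmem
        rintro z ⟨x, hx, rfl⟩
        rcases hx with hx | hx
        · refine Subfield.subset_closure (Or.inr ?_)
          have : E.exp x ∈ Sfin :=
            Finset.mem_union_right _ (Finset.mem_image_of_mem _ (Finset.mem_coe.mp hx))
          exact Finset.mem_coe.mpr this
        · rw [hx.2]; exact Subfield.one_mem _
    -- assemble
    have hsubW : (A1 ∪ K3) ∪ (↑Wfin : Set F) ⊆ A2 ∪ K3 := by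
      intro x hx
      rcases hx with (hx | hx) | hx
      · exact Or.inl (hc12 hx)
      · exact Or.inr hx
      · exact Or.inl (hWA2 hx)
    have l1 := hcldim ((F₁.dom : Set F) ∪ K3) Set.subset_union_right
    have l2 : ldimN F ((F₁.dom : Set F) ∪ K3) ↑c ≤ ldimN F ((F₁.dom : Set F) ∪ K2) ↑c :=
      ldimN_mono_base (Set.union_subset_union_right _ hk23) c
    have l4 : tdN F (A1 ∪ K2) ↑Wfin = aiCard (A1 ∪ K2) Wfin := tdN_eq_aiCard _ _
    have l5 : tdN F (A2 ∪ K3) ↑Sfin = aiCard (A2 ∪ K3) Sfin := tdN_eq_aiCard _ _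
    have l6 : aiCard (A2 ∪ K3) Sfin ≤ aiCard ((A1 ∪ K3) ∪ ↑Wfin) Sfin :=
      aiCard_mono_base hsubW Sfin
    have l7 := le_aiCard_union (A1 ∪ K3) Wfin Sfin
    have l8 : Wfin ∪ Sfin = Sfin ∪ Wfin := Finset.union_comm _ _
    have l9 : aiCard (A1 ∪ K3) (Sfin ∪ Wfin) ≤ aiCard (A1 ∪ K3) Sfin := aiCard_absorb hWabs
    have l10 : tdN F (A1 ∪ K3) ↑Sfin = aiCard (A1 ∪ K3) Sfin := tdN_eq_aiCard _ _
    rw [l8] at l7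
    simp only [Delta, sub_nonneg]
    rw [hS_coe, hsD_coe]
    have hfinal : ldimN F ((F₁.dom : Set F) ∪ K3) ↑sD ≤ tdN F (A1 ∪ K3) ↑Sfin := by omega
    exact_mod_cast hfinal
  · intro t ht
    have e1 : F₁.kerSet ∪ F₃.kerSet = F₂.kerSet ∪ F₃.kerSet := by
      rw [Set.union_eq_self_of_subset_left (hk12.trans hk23),
        Set.union_eq_self_of_subset_left hk23]
    have e2 : F₂.kerSet = F₁.kerSet ∪ F₂.kerSet :=
      (Set.union_eq_self_of_subset_left hk12).symm
    rw [e1, hs23k t (fun x hx => hc12 (ht hx)), e2, hs12k t ht]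

end Paper
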